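/- Let A, C ∈ ℝ^{n×n}, B, D ∈ ℝ^{n×m}, let Q ∈ ℝ^{n×n} and R ∈ ℝ^{m×m} be symmetric positive definite, and let γ ∈ [0,1). Let (L_i)_{i≥0} and symmetric positive definite (P_i)_{i≥0} satisfy the policy-iteration recursion: P_i = γ(A+BL_i)ᵀP_i(A+BL_i) + γ(C+DL_i)ᵀP_i(C+DL_i) + L_iᵀRL_i + Q and L_{i+1} = −(R + γBᵀP_iB + γDᵀP_iD)⁻¹(γBᵀP_iA + γDᵀP_iC) for all i. For each i define the Q-function kernel H_i as the block matrix with blocks (H_i)_xx = Q + γAᵀP_iA + γCᵀP_iC, (H_i)_xu = γ(AᵀP_iB + CᵀP_iD) = (H_i)_uxᵀ, (H_i)_uu = R + γBᵀP_iB + γDᵀP_iD, and define H* analogously from the unique symmetric positive definite solution P* of the stochastic algebraic Riccati equation P* = Q + γAᵀP*A + γCᵀP*C − (γAᵀP*B + γCᵀP*D)(R + γBᵀP*B + γDᵀP*D)⁻¹(γBᵀP*A + γDᵀP*C). Then H_i converges to H* and L_i converges to L* = −(H*_uu)⁻¹ H*_ux as i → ∞. -/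

import Mathlib

open Matrix Filter Topology
set_option linter.unusedSectionVars false
set_option maxHeartbeats 3200000

section helpers2
variable {k l : Type*} [Fintype k] [DecidableEq k] [Fintype l]

lemma herm_iff (X : Matrix k k ℝ) : X.IsHermitian ↔ Xᵀ = X := by
  rw [Matrix.IsHermitian, Matrix.conjTranspose_eq_transpose_of_trivial]

lemma qf_nonneg {X : Matrix k k ℝ} (h : X.PosSemidef) (x : k → ℝ) :
    0 ≤ x ⬝ᵥ (X *ᵥ x) := by simpa using h.dotProduct_mulVec_nonneg x

lemma psd_of_real {X : Matrix k k ℝ} (h1 : Xᵀ = X) (h2 : ∀ x, 0 ≤ x ⬝ᵥ (X *ᵥ x)) :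
    X.PosSemidef := Matrix.PosSemidef.of_dotProduct_mulVec_nonneg ((herm_iff X).2 h1) fun x => by simpa using h2 x

lemma psd_smul {X : Matrix k k ℝ} (h : X.PosSemidef) {γ : ℝ} (hγ : 0 ≤ γ) :
    (γ • X).PosSemidef := by
  refine psd_of_real ?_ fun x => ?_
  · rw [Matrix.transpose_smul, (herm_iff X).1 h.1]
  · rw [Matrix.smul_mulVec, dotProduct_smul]
    exact mul_nonneg hγ (qf_nonneg h x)

lemma psd_conj {X : Matrix k k ℝ} (h : X.PosSemidef) (E : Matrix k l ℝ) :
    (Eᵀ * X * E).PosSemidef := by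
  have := h.conjTranspose_mul_mul_same E
  rwa [Matrix.conjTranspose_eq_transpose_of_trivial] at this

lemma qf_mono {X Y : Matrix k k ℝ} (h : (X - Y).PosSemidef) (x : k → ℝ) :
    x ⬝ᵥ (Y *ᵥ x) ≤ x ⬝ᵥ (X *ᵥ x) := by
  have := qf_nonneg h x
  rw [Matrix.sub_mulVec, dotProduct_sub] at this
  linarith




lemma qf_continuous (S : Matrix k k ℝ) : Continuous fun x : k → ℝ => x ⬝ᵥ (S *ᵥ x) := by
  simp only [dotProduct, Matrix.mulVec, dotProduct]
  fun_prop

lemma qf_scale (S : Matrix k k ℝ) (a : ℝ) (x : k → ℝ) :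
    (a • x) ⬝ᵥ (S *ᵥ (a • x)) = a ^ 2 * (x ⬝ᵥ (S *ᵥ x)) := by
  rw [Matrix.mulVec_smul, dotProduct_smul, smul_dotProduct]
  simp only [smul_eq_mul, sq]
  ring

lemma qf_lower {S : Matrix k k ℝ} (hS : S.PosDef) :
    ∃ ε > 0, ∀ x : k → ℝ, ε * (∑ i, x i ^ 2) ≤ x ⬝ᵥ (S *ᵥ x) := by
  by_cases hk : Nonempty k
  · have hcomp : IsCompact (Metric.sphere (0 : k → ℝ) 1) := isCompact_sphere 0 1
    have hne : (Metric.sphere (0 : k → ℝ) 1).Nonempty := by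
      refine ⟨fun _ => 1, ?_⟩
      simp [Metric.mem_sphere, dist_eq_norm]
    obtain ⟨x₀, hx₀s, hx₀min⟩ := hcomp.exists_isMinOn hne (qf_continuous S).continuousOn
    have hx₀ne : x₀ ≠ 0 := by
      intro h
      rw [Metric.mem_sphere, dist_eq_norm, h] at hx₀s
      simp at hx₀s
    have hε₀ : 0 < x₀ ⬝ᵥ (S *ᵥ x₀) := by simpa using hS.dotProduct_mulVec_pos hx₀ne
    set ε₀ := x₀ ⬝ᵥ (S *ᵥ x₀)
    refine ⟨ε₀ / Fintype.card k, div_pos hε₀ (by exact_mod_cast Fintype.card_pos), fun x => ?_⟩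
    by_cases hx : x = 0
    · simp [hx]
    · set u : k → ℝ := ‖x‖⁻¹ • x with hu
      have hxn : ‖x‖ ≠ 0 := norm_ne_zero_iff.2 hx
      have hus : u ∈ Metric.sphere (0 : k → ℝ) 1 := by
        simp [hu, Metric.mem_sphere, dist_eq_norm, norm_smul, abs_of_nonneg, inv_mul_cancel₀ hxn]
      have h1 : ε₀ ≤ u ⬝ᵥ (S *ᵥ u) := hx₀min hus
      have h2 : x ⬝ᵥ (S *ᵥ x) = ‖x‖ ^ 2 * (u ⬝ᵥ (S *ᵥ u)) := by
        rw [hu, qf_scale]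
        have : ‖x‖ ^ 2 * ((‖x‖⁻¹) ^ 2 * (x ⬝ᵥ (S *ᵥ x))) = (‖x‖ * ‖x‖⁻¹) ^ 2 * (x ⬝ᵥ (S *ᵥ x)) := by ring
        rw [this, mul_inv_cancel₀ hxn]; ring
      have h3 : (∑ i, x i ^ 2) ≤ Fintype.card k * ‖x‖ ^ 2 := by
        have : ∀ i, x i ^ 2 ≤ ‖x‖ ^ 2 := fun i => by
          have := norm_le_pi_norm x i
          have h0 : |x i| ≤ ‖x‖ := by simpa using this
          calc x i ^ 2 = |x i| ^ 2 := (sq_abs _).symm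
            _ ≤ ‖x‖ ^ 2 := by nlinarith [abs_nonneg (x i)]
        calc (∑ i, x i ^ 2) ≤ ∑ _i : k, ‖x‖ ^ 2 := Finset.sum_le_sum fun i _ => this i
          _ = Fintype.card k * ‖x‖ ^ 2 := by simp [Finset.sum_const, nsmul_eq_mul]
      have hcard : (0:ℝ) < Fintype.card k := by exact_mod_cast Fintype.card_pos
      rw [h2]
      calc ε₀ / Fintype.card k * (∑ i, x i ^ 2) ≤ ε₀ / Fintype.card k * (Fintype.card k * ‖x‖ ^ 2) := by
            apply mul_le_mul_of_nonneg_left h3 (le_of_lt (div_pos hε₀ hcard))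
        _ = ε₀ * ‖x‖ ^ 2 := by field_simp
        _ ≤ ‖x‖ ^ 2 * (u ⬝ᵥ (S *ᵥ u)) := by nlinarith [sq_nonneg ‖x‖]
  · refine ⟨1, one_pos, fun x => ?_⟩
    rw [not_nonempty_iff] at hk
    simp [dotProduct]

lemma qf_upper (M : Matrix k k ℝ) :
    ∃ C : ℝ, ∀ x : k → ℝ, x ⬝ᵥ (M *ᵥ x) ≤ C * (∑ i, x i ^ 2) := by
  refine ⟨∑ i, ∑ j, |M i j|, fun x => ?_⟩
  have hsq : ∀ i, x i ^ 2 ≤ ∑ i', x i' ^ 2 := fun i =>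
    Finset.single_le_sum (fun i' _ => sq_nonneg (x i')) (Finset.mem_univ i)
  have key : ∀ i j, x i * (M i j * x j) ≤ |M i j| * (∑ i', x i' ^ 2) := by
    intro i j
    have h1 : x i * (M i j * x j) ≤ |M i j| * (|x i| * |x j|) := by
      calc x i * (M i j * x j) ≤ |x i * (M i j * x j)| := le_abs_self _
        _ = |M i j| * (|x i| * |x j|) := by rw [abs_mul, abs_mul]; ring
    have h2 : |x i| * |x j| ≤ ∑ i', x i' ^ 2 := by
      nlinarith [hsq i, hsq j, sq_abs (x i), sq_abs (x j), sq_nonneg (|x i| - |x j|),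
        abs_nonneg (x i), abs_nonneg (x j)]
    calc x i * (M i j * x j) ≤ |M i j| * (|x i| * |x j|) := h1
      _ ≤ |M i j| * (∑ i', x i' ^ 2) := mul_le_mul_of_nonneg_left h2 (abs_nonneg _)
  calc x ⬝ᵥ (M *ᵥ x) = ∑ i, ∑ j, x i * (M i j * x j) := by
        simp [dotProduct, Matrix.mulVec, dotProduct, Finset.mul_sum]
    _ ≤ ∑ i, ∑ j, |M i j| * (∑ i', x i' ^ 2) :=
        Finset.sum_le_sum fun i _ => Finset.sum_le_sum fun j _ => key i j
    _ = (∑ i, ∑ j, |M i j|) * (∑ i', x i' ^ 2) := by rw [Finset.sum_mul]; congr 1; ext i; rw [Finset.sum_mul]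

/-- Any symmetric matrix is dominated by a positive multiple of a positive definite matrix. -/
lemma dominate {S : Matrix k k ℝ} (hS : S.PosDef) {M : Matrix k k ℝ} (hM : Mᵀ = M) :
    ∃ c : ℝ, 1 ≤ c ∧ (c • S - M).PosSemidef := by
  obtain ⟨ε, hε, hlow⟩ := qf_lower hS
  obtain ⟨C, hupp⟩ := qf_upper M
  refine ⟨max (C / ε) 1, ?_, ?_⟩
  · exact le_max_right _ _
  refine psd_of_real ?_ fun x => ?_
  · rw [Matrix.transpose_sub, Matrix.transpose_smul, hM, (herm_iff S).1 hS.1]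
  · have hx := hlow x
    have hx2 := hupp x
    have hg : 0 ≤ ∑ i, x i ^ 2 := Finset.sum_nonneg fun i _ => sq_nonneg _
    have hQS : 0 ≤ x ⬝ᵥ (S *ᵥ x) := le_trans (by positivity) hx
    have h1 : x ⬝ᵥ (M *ᵥ x) ≤ max (C / ε) 1 * (x ⬝ᵥ (S *ᵥ x)) := by
      rcases le_or_gt C 0 with hC | hC
      · calc x ⬝ᵥ (M *ᵥ x) ≤ C * (∑ i, x i ^ 2) := hx2
          _ ≤ 0 := mul_nonpos_of_nonpos_of_nonneg hC hg
          _ ≤ max (C / ε) 1 * (x ⬝ᵥ (S *ᵥ x)) := by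
              have : (0:ℝ) ≤ max (C / ε) 1 := le_trans zero_le_one (le_max_right _ _)
              positivity
      · calc x ⬝ᵥ (M *ᵥ x) ≤ C * (∑ i, x i ^ 2) := hx2
          _ = (C / ε) * (ε * (∑ i, x i ^ 2)) := by field_simp
          _ ≤ (C / ε) * (x ⬝ᵥ (S *ᵥ x)) :=
              mul_le_mul_of_nonneg_left hx (le_of_lt (div_pos hC hε))
          _ ≤ max (C / ε) 1 * (x ⬝ᵥ (S *ᵥ x)) :=
              mul_le_mul_of_nonneg_right (le_max_left _ _) hQS
    rw [Matrix.sub_mulVec, dotProduct_sub, Matrix.smul_mulVec, dotProduct_smul]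
    simp only [smul_eq_mul]
    linarith

end helpers2

section key
variable {k : Type*} [Fintype k] [DecidableEq k]

variable (γ : ℝ) (A₁ C₁ : Matrix k k ℝ)

/-- The closed-loop "stochastic Lyapunov" operator. -/
def lyapT (X : Matrix k k ℝ) : Matrix k k ℝ :=
  γ • (A₁ᵀ * X * A₁) + γ • (C₁ᵀ * X * C₁)

variable {γ A₁ C₁}

lemma lyapT_sub (X Y : Matrix k k ℝ) :
    lyapT γ A₁ C₁ (X - Y) = lyapT γ A₁ C₁ X - lyapT γ A₁ C₁ Y := by
  simp only [lyapT, Matrix.mul_sub, Matrix.sub_mul, smul_sub]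
  abel

lemma lyapT_smul (a : ℝ) (X : Matrix k k ℝ) :
    lyapT γ A₁ C₁ (a • X) = a • lyapT γ A₁ C₁ X := by
  simp only [lyapT, Matrix.mul_smul, Matrix.smul_mul, smul_add, smul_comm a γ]

lemma lyapT_psd (hγ : 0 ≤ γ) {X : Matrix k k ℝ} (hX : X.PosSemidef) :
    (lyapT γ A₁ C₁ X).PosSemidef :=
  (psd_smul (psd_conj hX A₁) hγ).add (psd_smul (psd_conj hX C₁) hγ)

lemma lyapT_iter_sub (N : ℕ) (X Y : Matrix k k ℝ) :
    (lyapT γ A₁ C₁)^[N] (X - Y) = (lyapT γ A₁ C₁)^[N] X - (lyapT γ A₁ C₁)^[N] Y := by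
  induction N with
  | zero => simp
  | succ N ih => simp only [Function.iterate_succ_apply', ih, lyapT_sub]

lemma lyapT_iter_smul (N : ℕ) (a : ℝ) (X : Matrix k k ℝ) :
    (lyapT γ A₁ C₁)^[N] (a • X) = a • (lyapT γ A₁ C₁)^[N] X := by
  induction N with
  | zero => simp
  | succ N ih => simp only [Function.iterate_succ_apply', ih, lyapT_smul]

lemma lyapT_iter_psd (hγ : 0 ≤ γ) (N : ℕ) {X : Matrix k k ℝ} (hX : X.PosSemidef) :
    ((lyapT γ A₁ C₁)^[N] X).PosSemidef := by
  induction N with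
  | zero => simpa
  | succ N ih => rw [Function.iterate_succ_apply']; exact lyapT_psd hγ ih

/-- Key stability lemma: if `P ≻ 0` is a Lyapunov certificate for `T = lyapT γ A₁ C₁`
(`P = T P + S`, `S ≻ 0`), then any symmetric fixed-point-with-residual
`Δ = T Δ + W` with `W ⪰ 0` is positive semidefinite. -/
lemma lyap_stable (hγ : 0 ≤ γ) {P S Δ W : Matrix k k ℝ}
    (hP : P.PosDef) (hS : S.PosDef) (hfix : P = lyapT γ A₁ C₁ P + S)
    (hΔh : Δᵀ = Δ) (hW : W.PosSemidef) (hΔ : Δ = lyapT γ A₁ C₁ Δ + W) :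
    Δ.PosSemidef := by
  obtain ⟨c₁, hc₁, hdom₁⟩ := dominate hP hΔh
  obtain ⟨c₂, hc₂, hdom₂⟩ := dominate hP (by rw [Matrix.transpose_neg, hΔh] : (-Δ)ᵀ = -Δ)
  obtain ⟨c₃, hc₃, hdom₃⟩ := dominate hS ((herm_iff P).1 hP.1)
  have hc₃0 : (0:ℝ) < c₃ := lt_of_lt_of_le one_pos hc₃
  set ε : ℝ := c₃⁻¹ with hε
  have hε0 : 0 < ε := inv_pos.2 hc₃0
  have hε1 : ε ≤ 1 := inv_le_one_of_one_le₀ hc₃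
  have hSP : (S - ε • P).PosSemidef := by
    have h := psd_smul hdom₃ (le_of_lt hε0)
    have heq : ε • (c₃ • S - P) = S - ε • P := by
      rw [smul_sub, smul_smul, hε, inv_mul_cancel₀ (ne_of_gt hc₃0), one_smul]
    rwa [heq] at h
  have hTP : lyapT γ A₁ C₁ P = P - S := by rw [eq_sub_iff_add_eq]; exact hfix.symm
  have hTΔ : lyapT γ A₁ C₁ Δ = Δ - W := by rw [eq_sub_iff_add_eq]; exact hΔ.symm
  have idP : ∀ N, (lyapT γ A₁ C₁)^[N + 1] P
      = (lyapT γ A₁ C₁)^[N] P - (lyapT γ A₁ C₁)^[N] S := fun N => by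
    rw [Function.iterate_succ_apply, hTP, lyapT_iter_sub]
  have idΔ : ∀ N, (lyapT γ A₁ C₁)^[N + 1] Δ
      = (lyapT γ A₁ C₁)^[N] Δ - (lyapT γ A₁ C₁)^[N] W := fun N => by
    rw [Function.iterate_succ_apply, hTΔ, lyapT_iter_sub]
  have iter_neg : ∀ N, (lyapT γ A₁ C₁)^[N] (-Δ) = -((lyapT γ A₁ C₁)^[N] Δ) := fun N => by
    have h := lyapT_iter_smul (γ := γ) (A₁ := A₁) (C₁ := C₁) N (-1 : ℝ) Δ
    simpa using h
  have monP : ∀ N, ((lyapT γ A₁ C₁)^[N] S - ε • (lyapT γ A₁ C₁)^[N] P).PosSemidef := fun N => by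
    have h := lyapT_iter_psd (A₁ := A₁) (C₁ := C₁) hγ N hSP
    rwa [lyapT_iter_sub, lyapT_iter_smul] at h
  have bound1 : ∀ N, (c₁ • (lyapT γ A₁ C₁)^[N] P - (lyapT γ A₁ C₁)^[N] Δ).PosSemidef := fun N => by
    have h := lyapT_iter_psd (A₁ := A₁) (C₁ := C₁) hγ N hdom₁
    rwa [lyapT_iter_sub, lyapT_iter_smul] at h
  have bound2 : ∀ N, (c₂ • (lyapT γ A₁ C₁)^[N] P + (lyapT γ A₁ C₁)^[N] Δ).PosSemidef := fun N => by
    have h := lyapT_iter_psd (A₁ := A₁) (C₁ := C₁) hγ N hdom₂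
    rw [lyapT_iter_sub, lyapT_iter_smul, iter_neg, sub_neg_eq_add] at h
    exact h
  have psdP : ∀ N, ((lyapT γ A₁ C₁)^[N] P).PosSemidef := fun N => lyapT_iter_psd hγ N hP.posSemidef
  have psdW : ∀ N, ((lyapT γ A₁ C₁)^[N] W).PosSemidef := fun N => lyapT_iter_psd hγ N hW
  refine psd_of_real hΔh fun x => ?_
  set p : ℕ → ℝ := fun N => x ⬝ᵥ (((lyapT γ A₁ C₁)^[N] P) *ᵥ x) with hp
  set g : ℕ → ℝ := fun N => x ⬝ᵥ (((lyapT γ A₁ C₁)^[N] Δ) *ᵥ x) with hg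
  have hp_nonneg : ∀ N, 0 ≤ p N := fun N => qf_nonneg (psdP N) x
  have hs_ge : ∀ N, ε * p N ≤ x ⬝ᵥ (((lyapT γ A₁ C₁)^[N] S) *ᵥ x) := fun N => by
    have h := qf_mono (monP N) x
    rwa [Matrix.smul_mulVec, dotProduct_smul, smul_eq_mul] at h
  have hpsucc : ∀ N, p (N + 1) ≤ (1 - ε) * p N := fun N => by
    have h1 : p (N + 1) = p N - x ⬝ᵥ (((lyapT γ A₁ C₁)^[N] S) *ᵥ x) := by
      simp only [hp, idP N, Matrix.sub_mulVec, dotProduct_sub]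
    have h2 := hs_ge N
    rw [h1]; nlinarith
  have hppow : ∀ N, p N ≤ (1 - ε) ^ N * p 0 := by
    intro N
    induction N with
    | zero => simp
    | succ N ih =>
      calc p (N + 1) ≤ (1 - ε) * p N := hpsucc N
        _ ≤ (1 - ε) * ((1 - ε) ^ N * p 0) :=
            mul_le_mul_of_nonneg_left ih (by linarith)
        _ = (1 - ε) ^ (N + 1) * p 0 := by ring
  have hgeo : Tendsto (fun N => (1 - ε) ^ N * p 0) atTop (𝓝 0) := by
    have h1 : |1 - ε| < 1 := by rw [abs_lt]; constructor <;> linarith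
    have h2 := (tendsto_pow_atTop_nhds_zero_of_abs_lt_one h1).mul_const (p 0)
    simpa using h2
  have hp0 : Tendsto p atTop (𝓝 0) := squeeze_zero hp_nonneg hppow hgeo
  have hg_ub : ∀ N, g N ≤ c₁ * p N := fun N => by
    have h := qf_mono (bound1 N) x
    rwa [Matrix.smul_mulVec, dotProduct_smul, smul_eq_mul] at h
  have hg_lb : ∀ N, -(c₂ * p N) ≤ g N := fun N => by
    have h := qf_nonneg (bound2 N) x
    rw [Matrix.add_mulVec, dotProduct_add, Matrix.smul_mulVec, dotProduct_smul,
      smul_eq_mul] at h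
    linarith
  have hg0 : Tendsto g atTop (𝓝 0) := by
    have hub : Tendsto (fun N => c₁ * p N) atTop (𝓝 0) := by
      simpa using hp0.const_mul c₁
    have hlb : Tendsto (fun N => -(c₂ * p N)) atTop (𝓝 0) := by
      simpa using (hp0.const_mul c₂).neg
    exact tendsto_of_tendsto_of_tendsto_of_le_of_le hlb hub hg_lb hg_ub
  have hg_anti : ∀ N, g N ≤ g 0 := by
    intro N
    induction N with
    | zero => exact le_refl _
    | succ N ih =>
      have h1 : g (N + 1) = g N - x ⬝ᵥ (((lyapT γ A₁ C₁)^[N] W) *ᵥ x) := by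
        simp only [hg, idΔ N, Matrix.sub_mulVec, dotProduct_sub]
      have h2 := qf_nonneg (psdW N) x
      linarith
  have hfinal : (0:ℝ) ≤ g 0 := le_of_tendsto hg0 (Filter.Eventually.of_forall hg_anti)
  simpa only [hg, Function.iterate_zero_apply] using hfinal

end key
section alg
variable {n m : ℕ} (A C : Matrix (Fin n) (Fin n) ℝ) (B D : Matrix (Fin n) (Fin m) ℝ)
  (Q : Matrix (Fin n) (Fin n) ℝ) (R : Matrix (Fin m) (Fin m) ℝ) (γ : ℝ)

lemma expandF {P : Matrix (Fin n) (Fin n) ℝ} (hP : Pᵀ = P) (L : Matrix (Fin m) (Fin n) ℝ) :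
    γ • ((A + B * L)ᵀ * P * (A + B * L)) + γ • ((C + D * L)ᵀ * P * (C + D * L))
      + Lᵀ * R * L + Q
    = (Q + γ • (Aᵀ * P * A) + γ • (Cᵀ * P * C))
      + (γ • (Bᵀ * P * A) + γ • (Dᵀ * P * C))ᵀ * L
      + Lᵀ * (γ • (Bᵀ * P * A) + γ • (Dᵀ * P * C))
      + Lᵀ * ((R + γ • (Bᵀ * P * B) + γ • (Dᵀ * P * D)) * L) := by
  simp only [Matrix.transpose_add, Matrix.transpose_mul, Matrix.transpose_smul,
    Matrix.transpose_transpose, hP, Matrix.add_mul, Matrix.mul_add, Matrix.smul_mul,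
    Matrix.mul_smul, smul_add, Matrix.mul_assoc]
  abel

lemma completion {P : Matrix (Fin n) (Fin n) ℝ} (hP : Pᵀ = P) (hRs : Rᵀ = R)
    (K L' : Matrix (Fin m) (Fin n) ℝ)
    (hK : (R + γ • (Bᵀ * P * B) + γ • (Dᵀ * P * D)) * K
      = -(γ • (Bᵀ * P * A) + γ • (Dᵀ * P * C))) :
    γ • ((A + B * L')ᵀ * P * (A + B * L')) + γ • ((C + D * L')ᵀ * P * (C + D * L'))
      + L'ᵀ * R * L' + Q
    = (γ • ((A + B * K)ᵀ * P * (A + B * K)) + γ • ((C + D * K)ᵀ * P * (C + D * K))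
      + Kᵀ * R * K + Q)
      + (L' - K)ᵀ * (R + γ • (Bᵀ * P * B) + γ • (Dᵀ * P * D)) * (L' - K) := by
  have hMs : (R + γ • (Bᵀ * P * B) + γ • (Dᵀ * P * D))ᵀ
      = R + γ • (Bᵀ * P * B) + γ • (Dᵀ * P * D) := by
    simp only [Matrix.transpose_add, Matrix.transpose_smul, Matrix.transpose_mul,
      Matrix.transpose_transpose, hP, hRs, Matrix.mul_assoc]
  have hN : (γ • (Bᵀ * P * A) + γ • (Dᵀ * P * C))
      = -((R + γ • (Bᵀ * P * B) + γ • (Dᵀ * P * D)) * K) := by rw [hK, neg_neg]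
  rw [expandF A C B D Q R γ hP L', expandF A C B D Q R γ hP K, hN]
  set M := R + γ • (Bᵀ * P * B) + γ • (Dᵀ * P * D) with hM
  simp only [Matrix.transpose_neg, Matrix.transpose_mul, hMs, Matrix.sub_mul, Matrix.mul_sub,
    Matrix.neg_mul, Matrix.mul_neg, Matrix.transpose_sub, Matrix.mul_assoc]
  abel

lemma stationary {P : Matrix (Fin n) (Fin n) ℝ} (hP : Pᵀ = P)
    (K : Matrix (Fin m) (Fin n) ℝ)
    (hK : (R + γ • (Bᵀ * P * B) + γ • (Dᵀ * P * D)) * K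
      = -(γ • (Bᵀ * P * A) + γ • (Dᵀ * P * C))) :
    γ • ((A + B * K)ᵀ * P * (A + B * K)) + γ • ((C + D * K)ᵀ * P * (C + D * K))
      + Kᵀ * R * K + Q
    = (Q + γ • (Aᵀ * P * A) + γ • (Cᵀ * P * C))
      + (γ • (Bᵀ * P * A) + γ • (Dᵀ * P * C))ᵀ * K := by
  rw [expandF A C B D Q R γ hP K]
  have h1 : Kᵀ * ((R + γ • (Bᵀ * P * B) + γ • (Dᵀ * P * D)) * K)
      = -(Kᵀ * (γ • (Bᵀ * P * A) + γ • (Dᵀ * P * C))) := by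
    rw [hK, Matrix.mul_neg]
  rw [h1]
  abel

end alg

section tendstohelp
variable {ι α : Type*} [TopologicalSpace α] {l : Filter ι}

lemma tendsto_matrix {p q : Type*} {f : ι → Matrix p q α} {X : Matrix p q α}
    (h : ∀ i j, Tendsto (fun a => f a i j) l (𝓝 (X i j))) :
    Tendsto f l (𝓝 X) := by
  apply tendsto_pi_nhds.2
  intro i
  exact tendsto_pi_nhds.2 fun j => h i j

lemma matrix_tendsto_apply {p q : Type*} {f : ι → Matrix p q α} {X : Matrix p q α}
    (h : Tendsto f l (𝓝 X)) (i : p) (j : q) :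
    Tendsto (fun a => f a i j) l (𝓝 (X i j)) :=
  tendsto_pi_nhds.1 (tendsto_pi_nhds.1 h i) j

lemma tendsto_fromBlocks {n₁ n₂ m₁ m₂ : Type*}
    {f1 : ι → Matrix n₁ m₁ α} {f2 : ι → Matrix n₁ m₂ α}
    {f3 : ι → Matrix n₂ m₁ α} {f4 : ι → Matrix n₂ m₂ α}
    {A₁ : Matrix n₁ m₁ α} {A₂ : Matrix n₁ m₂ α} {A₃ : Matrix n₂ m₁ α} {A₄ : Matrix n₂ m₂ α}
    (h1 : Tendsto f1 l (𝓝 A₁)) (h2 : Tendsto f2 l (𝓝 A₂))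
    (h3 : Tendsto f3 l (𝓝 A₃)) (h4 : Tendsto f4 l (𝓝 A₄)) :
    Tendsto (fun a => Matrix.fromBlocks (f1 a) (f2 a) (f3 a) (f4 a)) l
      (𝓝 (Matrix.fromBlocks A₁ A₂ A₃ A₄)) := by
  apply tendsto_matrix
  intro i j
  cases i <;> cases j <;>
    simp only [Matrix.fromBlocks_apply₁₁, Matrix.fromBlocks_apply₁₂,
      Matrix.fromBlocks_apply₂₁, Matrix.fromBlocks_apply₂₂]
  · exact matrix_tendsto_apply h1 _ _
  · exact matrix_tendsto_apply h2 _ _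
  · exact matrix_tendsto_apply h3 _ _
  · exact matrix_tendsto_apply h4 _ _

end tendstohelp

section tendstohelp2
variable {ι : Type*} {l : Filter ι}

lemma tendsto_mmul {p q r : Type*} [Fintype q] {f : ι → Matrix p q ℝ} {g : ι → Matrix q r ℝ}
    {X : Matrix p q ℝ} {Y : Matrix q r ℝ}
    (hf : Tendsto f l (𝓝 X)) (hg : Tendsto g l (𝓝 Y)) :
    Tendsto (fun i => f i * g i) l (𝓝 (X * Y)) := by
  apply tendsto_matrix
  intro a b
  have h : Tendsto (fun i => ∑ c, f i a c * g i c b) l (𝓝 (∑ c, X a c * Y c b)) :=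
    tendsto_finset_sum _ fun c _ =>
      (matrix_tendsto_apply hf a c).mul (matrix_tendsto_apply hg c b)
  simpa only [Matrix.mul_apply] using h

lemma tendsto_mtrans {p q : Type*} {f : ι → Matrix p q ℝ} {X : Matrix p q ℝ}
    (hf : Tendsto f l (𝓝 X)) : Tendsto (fun i => (f i)ᵀ) l (𝓝 Xᵀ) := by
  apply tendsto_matrix
  intro a b
  exact matrix_tendsto_apply hf b a

lemma tendsto_msmul {p q : Type*} (γ : ℝ) {f : ι → Matrix p q ℝ} {X : Matrix p q ℝ}
    (hf : Tendsto f l (𝓝 X)) : Tendsto (fun i => γ • f i) l (𝓝 (γ • X)) := by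
  apply tendsto_matrix
  intro a b
  have h := (matrix_tendsto_apply hf a b).const_mul γ
  simpa only [Matrix.smul_apply, smul_eq_mul] using h

lemma tendsto_maddm {p q : Type*} {f g : ι → Matrix p q ℝ} {X Y : Matrix p q ℝ}
    (hf : Tendsto f l (𝓝 X)) (hg : Tendsto g l (𝓝 Y)) :
    Tendsto (fun i => f i + g i) l (𝓝 (X + Y)) := by
  apply tendsto_matrix
  intro a b
  have h := (matrix_tendsto_apply hf a b).add (matrix_tendsto_apply hg a b)
  simpa only [Matrix.add_apply] using h

lemma tendsto_mneg {p q : Type*} {f : ι → Matrix p q ℝ} {X : Matrix p q ℝ}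
    (hf : Tendsto f l (𝓝 X)) : Tendsto (fun i => -(f i)) l (𝓝 (-X)) := by
  apply tendsto_matrix
  intro a b
  have h := (matrix_tendsto_apply hf a b).neg
  simpa only [Matrix.neg_apply] using h

lemma tendsto_mconst {p q : Type*} (X : Matrix p q ℝ) :
    Tendsto (fun _ : ι => X) l (𝓝 X) := tendsto_const_nhds

lemma tendsto_smulf {p q : Type*} {f : ι → ℝ} {g : ι → Matrix p q ℝ} {a : ℝ}
    {X : Matrix p q ℝ} (hf : Tendsto f l (𝓝 a)) (hg : Tendsto g l (𝓝 X)) :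
    Tendsto (fun i => f i • g i) l (𝓝 (a • X)) := by
  apply tendsto_matrix
  intro i j
  have h := hf.mul (matrix_tendsto_apply hg i j)
  simpa only [Matrix.smul_apply, smul_eq_mul] using h

end tendstohelp2

lemma qfX_continuous {k : ℕ} (x : Fin k → ℝ) :
    Continuous fun X : Matrix (Fin k) (Fin k) ℝ => x ⬝ᵥ (X *ᵥ x) := by
  simp only [dotProduct, Matrix.mulVec, dotProduct]
  fun_prop

theorem stmt17 {n m : ℕ} (A C : Matrix (Fin n) (Fin n) ℝ)
    (B D : Matrix (Fin n) (Fin m) ℝ)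
    (Q : Matrix (Fin n) (Fin n) ℝ) (R : Matrix (Fin m) (Fin m) ℝ) (γ : ℝ)
    (hQ : Q.PosDef) (hR : R.PosDef) (hγ0 : 0 ≤ γ) (hγ1 : γ < 1)
    (L : ℕ → Matrix (Fin m) (Fin n) ℝ) (P : ℕ → Matrix (Fin n) (Fin n) ℝ)
    (hPpd : ∀ i, (P i).PosDef)
    (hsle : ∀ i, P i = γ • ((A + B * L i)ᵀ * P i * (A + B * L i)) +
      γ • ((C + D * L i)ᵀ * P i * (C + D * L i)) + (L i)ᵀ * R * (L i) + Q)
    (hupd : ∀ i, L (i + 1) = -((R + γ • (Bᵀ * P i * B) + γ • (Dᵀ * P i * D))⁻¹ *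
      (γ • (Bᵀ * P i * A) + γ • (Dᵀ * P i * C))))
    (H : ℕ → Matrix (Fin n ⊕ Fin m) (Fin n ⊕ Fin m) ℝ)
    (hH : ∀ i, H i = Matrix.fromBlocks
      (Q + γ • (Aᵀ * P i * A) + γ • (Cᵀ * P i * C))
      (γ • (Aᵀ * P i * B + Cᵀ * P i * D))
      ((γ • (Aᵀ * P i * B + Cᵀ * P i * D))ᵀ)
      (R + γ • (Bᵀ * P i * B) + γ • (Dᵀ * P i * D)))
    (Pstar : Matrix (Fin n) (Fin n) ℝ) (hPstar : Pstar.PosDef)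
    (hsare : Pstar = Q + γ • (Aᵀ * Pstar * A) + γ • (Cᵀ * Pstar * C) -
      (γ • (Aᵀ * Pstar * B) + γ • (Cᵀ * Pstar * D)) *
        (R + γ • (Bᵀ * Pstar * B) + γ • (Dᵀ * Pstar * D))⁻¹ *
        (γ • (Bᵀ * Pstar * A) + γ • (Dᵀ * Pstar * C)))
    (huniq : ∀ P' : Matrix (Fin n) (Fin n) ℝ, P'.PosDef →
      P' = Q + γ • (Aᵀ * P' * A) + γ • (Cᵀ * P' * C) -
        (γ • (Aᵀ * P' * B) + γ • (Cᵀ * P' * D)) *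
          (R + γ • (Bᵀ * P' * B) + γ • (Dᵀ * P' * D))⁻¹ *
          (γ • (Bᵀ * P' * A) + γ • (Dᵀ * P' * C)) → P' = Pstar)
    (Hstar : Matrix (Fin n ⊕ Fin m) (Fin n ⊕ Fin m) ℝ)
    (hHstar : Hstar = Matrix.fromBlocks
      (Q + γ • (Aᵀ * Pstar * A) + γ • (Cᵀ * Pstar * C))
      (γ • (Aᵀ * Pstar * B + Cᵀ * Pstar * D))
      ((γ • (Aᵀ * Pstar * B + Cᵀ * Pstar * D))ᵀ)
      (R + γ • (Bᵀ * Pstar * B) + γ • (Dᵀ * Pstar * D)))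
    (Lstar : Matrix (Fin m) (Fin n) ℝ)
    (hLstar : Lstar = -((R + γ • (Bᵀ * Pstar * B) + γ • (Dᵀ * Pstar * D))⁻¹ *
      (γ • (Aᵀ * Pstar * B + Cᵀ * Pstar * D))ᵀ)) :
    Tendsto H atTop (𝓝 Hstar) ∧ Tendsto L atTop (𝓝 Lstar) := by
  -- symmetry facts
  have hPh : ∀ i, (P i)ᵀ = P i := fun i => (herm_iff _).1 (hPpd i).1
  have hRs : Rᵀ = R := (herm_iff _).1 hR.1
  -- the "policy evaluation" matrices
  have hMpd : ∀ i, (R + γ • (Bᵀ * P i * B) + γ • (Dᵀ * P i * D)).PosDef := fun i =>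
    (hR.add_posSemidef (psd_smul (psd_conj (hPpd i).posSemidef B) hγ0)).add_posSemidef
      (psd_smul (psd_conj (hPpd i).posSemidef D) hγ0)
  have hMK : ∀ i, (R + γ • (Bᵀ * P i * B) + γ • (Dᵀ * P i * D)) * L (i + 1)
      = -(γ • (Bᵀ * P i * A) + γ • (Dᵀ * P i * C)) := fun i => by
    rw [hupd i, Matrix.mul_neg, ← Matrix.mul_assoc,
      Matrix.mul_nonsing_inv _ (isUnit_iff_ne_zero.2 (hMpd i).det_pos.ne'), Matrix.one_mul]
  -- monotonicity: P i - P (i+1) is PSD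
  have mono : ∀ i, (P i - P (i + 1)).PosSemidef := by
    intro i
    set K := L (i + 1) with hKdef
    have hfix : P (i + 1) = lyapT γ (A + B * K) (C + D * K) (P (i + 1))
        + (Kᵀ * R * K + Q) := by
      conv_lhs => rw [hsle (i + 1)]
      simp only [lyapT]
      abel
    have e1 : P i = lyapT γ (A + B * K) (C + D * K) (P i)
        + (Kᵀ * R * K + Q)
        + (L i - K)ᵀ * (R + γ • (Bᵀ * P i * B) + γ • (Dᵀ * P i * D)) * (L i - K) := by
      conv_lhs => rw [hsle i]
      rw [completion A C B D Q R γ (hPh i) hRs K (L i) (hMK i)]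
      simp only [lyapT]
      abel
    have hW : ((L i - K)ᵀ * (R + γ • (Bᵀ * P i * B) + γ • (Dᵀ * P i * D))
        * (L i - K)).PosSemidef := psd_conj (hMpd i).posSemidef (L i - K)
    have hS : (Kᵀ * R * K + Q).PosDef :=
      Matrix.PosDef.posSemidef_add (psd_conj hR.posSemidef K) hQ
    have hΔeq : P i - P (i + 1) = lyapT γ (A + B * K) (C + D * K) (P i - P (i + 1))
        + (L i - K)ᵀ * (R + γ • (Bᵀ * P i * B) + γ • (Dᵀ * P i * D)) * (L i - K) := by
      conv_lhs => rw [e1, hfix]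
      rw [lyapT_sub]
      abel
    have hΔt : (P i - P (i + 1))ᵀ = P i - P (i + 1) := by
      rw [Matrix.transpose_sub, hPh i, hPh (i + 1)]
    exact lyap_stable hγ0 (hPpd (i + 1)) hS hfix hΔt hW hΔeq
  -- quadratic forms converge
  set qq : (Fin n → ℝ) → ℕ → ℝ := fun x i => x ⬝ᵥ (P i *ᵥ x) with hqq
  have hanti : ∀ x, Antitone (qq x) := fun x =>
    antitone_nat_of_succ_le fun i => qf_mono (mono i) x
  have hbdd : ∀ x, BddBelow (Set.range (qq x)) := fun x =>
    ⟨0, fun y ⟨i, hi⟩ => hi ▸ qf_nonneg (hPpd i).posSemidef x⟩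
  have hconv : ∀ x, Tendsto (qq x) atTop (𝓝 (⨅ i, qq x i)) := fun x =>
    tendsto_atTop_ciInf (hanti x) (hbdd x)
  set ll : (Fin n → ℝ) → ℝ := fun x => ⨅ i, qq x i with hll
  set e : Fin n → (Fin n → ℝ) := fun j => Pi.single j 1 with he
  set Pl : Matrix (Fin n) (Fin n) ℝ :=
    Matrix.of fun j k => (ll (e j + e k) - ll (e j) - ll (e k)) / 2 with hPl
  have hentry : ∀ i j k, P i j k
      = (qq (e j + e k) i - qq (e j) i - qq (e k) i) / 2 := by
    intro i j k
    have hsymm : P i k j = P i j k := by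
      have h := congrFun (congrFun (hPh i) k) j
      simpa [Matrix.transpose_apply] using h.symm
    simp only [hqq, he, Matrix.mulVec_add, dotProduct_add, add_dotProduct,
      Matrix.mulVec_single, dotProduct_single, single_dotProduct, dotProduct,
      Pi.single_apply, mul_ite, ite_mul, one_mul, mul_one, mul_zero, zero_mul,
      Finset.sum_ite_eq', Finset.mem_univ, if_true, Pi.add_apply]
    simp only [add_mul, mul_add, Finset.sum_add_distrib, ite_mul, one_mul, zero_mul,
      Finset.sum_ite_eq, Finset.sum_ite_eq', Finset.mem_univ, if_true]
    simp only [MulOpposite.op_one, one_smul, Matrix.col_apply]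
    rw [hsymm]
    ring
  have hPtend : Tendsto P atTop (𝓝 Pl) := by
    apply tendsto_matrix
    intro j k
    have h1 : Tendsto (fun i => (qq (e j + e k) i - qq (e j) i - qq (e k) i) / 2) atTop
        (𝓝 ((ll (e j + e k) - ll (e j) - ll (e k)) / 2)) :=
      (((hconv (e j + e k)).sub (hconv (e j))).sub (hconv (e k))).div_const 2
    exact Filter.Tendsto.congr (fun i => (hentry i j k).symm) h1
  have hPltendqf : ∀ x : Fin n → ℝ,
      Tendsto (fun i => x ⬝ᵥ (P i *ᵥ x)) atTop (𝓝 (x ⬝ᵥ (Pl *ᵥ x))) := fun x =>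
    ((qfX_continuous x).tendsto Pl).comp hPtend
  have hPlsym : Plᵀ = Pl := by
    ext j k
    simp only [hPl, Matrix.transpose_apply, Matrix.of_apply]
    rw [add_comm (e k) (e j)]
    ring
  have hPlpsd : Pl.PosSemidef := by
    refine psd_of_real hPlsym fun x => ?_
    exact ge_of_tendsto (hPltendqf x)
      (Filter.Eventually.of_forall fun i => qf_nonneg (hPpd i).posSemidef x)
  -- limits of M, N, L
  set Ml : Matrix (Fin m) (Fin m) ℝ := R + γ • (Bᵀ * Pl * B) + γ • (Dᵀ * Pl * D) with hMl
  set Nl : Matrix (Fin m) (Fin n) ℝ := γ • (Bᵀ * Pl * A) + γ • (Dᵀ * Pl * C) with hNl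
  have hMtend : Tendsto (fun i => R + γ • (Bᵀ * P i * B) + γ • (Dᵀ * P i * D)) atTop
      (𝓝 Ml) :=
    tendsto_maddm (tendsto_maddm (tendsto_mconst R)
      (tendsto_msmul γ (tendsto_mmul (tendsto_mmul (tendsto_mconst Bᵀ) hPtend) (tendsto_mconst B))))
      (tendsto_msmul γ (tendsto_mmul (tendsto_mmul (tendsto_mconst Dᵀ) hPtend) (tendsto_mconst D)))
  have hNtend : Tendsto (fun i => γ • (Bᵀ * P i * A) + γ • (Dᵀ * P i * C)) atTop
      (𝓝 Nl) :=
    tendsto_maddm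
      (tendsto_msmul γ (tendsto_mmul (tendsto_mmul (tendsto_mconst Bᵀ) hPtend) (tendsto_mconst A)))
      (tendsto_msmul γ (tendsto_mmul (tendsto_mmul (tendsto_mconst Dᵀ) hPtend) (tendsto_mconst C)))
  have hMlpd : Ml.PosDef :=
    (hR.add_posSemidef (psd_smul (psd_conj hPlpsd B) hγ0)).add_posSemidef
      (psd_smul (psd_conj hPlpsd D) hγ0)
  have hMldet : Ml.det ≠ 0 := hMlpd.det_pos.ne'
  have hMinvtend : Tendsto (fun i => (R + γ • (Bᵀ * P i * B) + γ • (Dᵀ * P i * D))⁻¹) atTop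
      (𝓝 Ml⁻¹) := by
    have hinv : ∀ X : Matrix (Fin m) (Fin m) ℝ, X⁻¹ = X.det⁻¹ • X.adjugate := fun X => by
      rw [Matrix.inv_def, Ring.inverse_eq_inv]
    have hdt : Tendsto (fun i => (R + γ • (Bᵀ * P i * B) + γ • (Dᵀ * P i * D)).det) atTop
        (𝓝 Ml.det) :=
      ((continuous_id.matrix_det).tendsto Ml).comp hMtend
    have hadj : Tendsto (fun i => (R + γ • (Bᵀ * P i * B) + γ • (Dᵀ * P i * D)).adjugate)
        atTop (𝓝 Ml.adjugate) :=
      ((continuous_id.matrix_adjugate).tendsto Ml).comp hMtend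
    have h := tendsto_smulf (hdt.inv₀ hMldet) hadj
    rw [← hinv Ml] at h
    exact Filter.Tendsto.congr (fun i => (hinv _).symm) h
  set Ll : Matrix (Fin m) (Fin n) ℝ := -(Ml⁻¹ * Nl) with hLl
  have hLtend1 : Tendsto (fun i => L (i + 1)) atTop (𝓝 Ll) := by
    have h := tendsto_mneg (tendsto_mmul hMinvtend hNtend)
    exact Filter.Tendsto.congr (fun i => (hupd i).symm) h
  -- pass to the limit in the policy-evaluation equation
  have hlim : Pl = γ • ((A + B * Ll)ᵀ * Pl * (A + B * Ll))
      + γ • ((C + D * Ll)ᵀ * Pl * (C + D * Ll)) + Llᵀ * R * Ll + Q := by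
    have hPs : Tendsto (fun i => P (i + 1)) atTop (𝓝 Pl) :=
      hPtend.comp (tendsto_add_atTop_nat 1)
    have hPs2 : Tendsto (fun i => P (i + 1)) atTop (𝓝 Pl) := hPs
    have hcl1 : Tendsto (fun i => A + B * L (i + 1)) atTop (𝓝 (A + B * Ll)) :=
      tendsto_maddm (tendsto_mconst A) (tendsto_mmul (tendsto_mconst B) hLtend1)
    have hcl2 : Tendsto (fun i => C + D * L (i + 1)) atTop (𝓝 (C + D * Ll)) :=
      tendsto_maddm (tendsto_mconst C) (tendsto_mmul (tendsto_mconst D) hLtend1)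
    have hRHS : Tendsto (fun i => γ • ((A + B * L (i + 1))ᵀ * P (i + 1) * (A + B * L (i + 1)))
        + γ • ((C + D * L (i + 1))ᵀ * P (i + 1) * (C + D * L (i + 1)))
        + (L (i + 1))ᵀ * R * (L (i + 1)) + Q) atTop
        (𝓝 (γ • ((A + B * Ll)ᵀ * Pl * (A + B * Ll))
        + γ • ((C + D * Ll)ᵀ * Pl * (C + D * Ll)) + Llᵀ * R * Ll + Q)) :=
      tendsto_maddm (tendsto_maddm (tendsto_maddm
        (tendsto_msmul γ (tendsto_mmul (tendsto_mmul (tendsto_mtrans hcl1) hPs2) hcl1))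
        (tendsto_msmul γ (tendsto_mmul (tendsto_mmul (tendsto_mtrans hcl2) hPs2) hcl2)))
        (tendsto_mmul (tendsto_mmul (tendsto_mtrans hLtend1) (tendsto_mconst R)) hLtend1))
        (tendsto_mconst Q)
    have hLHS : Tendsto (fun i => P (i + 1)) atTop
        (𝓝 (γ • ((A + B * Ll)ᵀ * Pl * (A + B * Ll))
        + γ • ((C + D * Ll)ᵀ * Pl * (C + D * Ll)) + Llᵀ * R * Ll + Q)) :=
      Filter.Tendsto.congr (fun i => (hsle (i + 1)).symm) hRHS
    exact tendsto_nhds_unique hPs hLHS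
  have hMlLl : Ml * Ll = -Nl := by
    rw [hLl, Matrix.mul_neg, ← Matrix.mul_assoc,
      Matrix.mul_nonsing_inv _ (isUnit_iff_ne_zero.2 hMldet), Matrix.one_mul]
  -- Pl is positive definite
  have hPlpd : Pl.PosDef := by
    rw [hlim]
    exact Matrix.PosDef.posSemidef_add
      (((psd_smul (psd_conj hPlpsd (A + B * Ll)) hγ0).add
        (psd_smul (psd_conj hPlpsd (C + D * Ll)) hγ0)).add
        (psd_conj hR.posSemidef Ll)) hQ
  -- Pl satisfies the SARE
  have hNlT : Nlᵀ = γ • (Aᵀ * Pl * B) + γ • (Cᵀ * Pl * D) := by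
    rw [hNl]
    simp only [Matrix.transpose_add, Matrix.transpose_smul, Matrix.transpose_mul,
      Matrix.transpose_transpose, hPlsym, Matrix.mul_assoc]
  have hsarePl : Pl = Q + γ • (Aᵀ * Pl * A) + γ • (Cᵀ * Pl * C) -
      (γ • (Aᵀ * Pl * B) + γ • (Cᵀ * Pl * D)) *
        (R + γ • (Bᵀ * Pl * B) + γ • (Dᵀ * Pl * D))⁻¹ *
        (γ • (Bᵀ * Pl * A) + γ • (Dᵀ * Pl * C)) := by
    have h1 := stationary A C B D Q R γ hPlsym Ll hMlLl
    conv_lhs => rw [hlim, h1]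
    rw [hNlT.symm, hLl, Matrix.mul_neg, ← Matrix.mul_assoc, ← hMl, ← hNl]
    abel
  have hPlPstar : Pl = Pstar := huniq Pl hPlpd hsarePl
  -- conclude
  constructor
  · have hf1 : Tendsto (fun i => Q + γ • (Aᵀ * P i * A) + γ • (Cᵀ * P i * C)) atTop
        (𝓝 (Q + γ • (Aᵀ * Pstar * A) + γ • (Cᵀ * Pstar * C))) := by
      rw [← hPlPstar]
      exact tendsto_maddm (tendsto_maddm (tendsto_mconst Q)
        (tendsto_msmul γ (tendsto_mmul (tendsto_mmul (tendsto_mconst Aᵀ) hPtend) (tendsto_mconst A))))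
        (tendsto_msmul γ (tendsto_mmul (tendsto_mmul (tendsto_mconst Cᵀ) hPtend) (tendsto_mconst C)))
    have hf2 : Tendsto (fun i => γ • (Aᵀ * P i * B + Cᵀ * P i * D)) atTop
        (𝓝 (γ • (Aᵀ * Pstar * B + Cᵀ * Pstar * D))) := by
      rw [← hPlPstar]
      exact tendsto_msmul γ (tendsto_maddm
        (tendsto_mmul (tendsto_mmul (tendsto_mconst Aᵀ) hPtend) (tendsto_mconst B))
        (tendsto_mmul (tendsto_mmul (tendsto_mconst Cᵀ) hPtend) (tendsto_mconst D)))
    have hf3 : Tendsto (fun i => (γ • (Aᵀ * P i * B + Cᵀ * P i * D))ᵀ) atTop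
        (𝓝 ((γ • (Aᵀ * Pstar * B + Cᵀ * Pstar * D))ᵀ)) := by
      exact tendsto_mtrans hf2
    have hf4 : Tendsto (fun i => R + γ • (Bᵀ * P i * B) + γ • (Dᵀ * P i * D)) atTop
        (𝓝 (R + γ • (Bᵀ * Pstar * B) + γ • (Dᵀ * Pstar * D))) := by
      rw [← hPlPstar]; exact hMtend
    have h := tendsto_fromBlocks hf1 hf2 hf3 hf4
    rw [← hHstar] at h
    exact Filter.Tendsto.congr (fun i => (hH i).symm) h
  · have hLlLstar : Ll = Lstar := by
      have htr : (γ • (Aᵀ * Pl * B + Cᵀ * Pl * D))ᵀ = Nl := by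
        rw [hNl]
        simp only [Matrix.transpose_smul, Matrix.transpose_add, Matrix.transpose_mul,
          Matrix.transpose_transpose, hPlsym, smul_add, Matrix.mul_assoc]
      rw [hLstar, ← hPlPstar, htr, ← hMl, ← hLl]
    rw [← hLlLstar]
    exact (tendsto_add_atTop_iff_nat 1).1 hLtend1
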